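/- Let t and n be positive integers and let P_n^t be the t-th power of the path on n vertices (vertices 1,…,n, with i ~ j iff 1 ≤ |i−j| ≤ t). For every 2-list assignment L of P_n^t there exists an L-coloring in which every monochromatic connected component has at most 2t² vertices; i.e., χ^ℓ_{⋆,2t²}(P_n^t) ≤ 2. -/

import Mathlib

/-- The `t`-th power `P_n^t` of the path on `n` vertices: `i ~ j` iff `1 ≤ |i - j| ≤ t`. -/
def pathPower (t n : ℕ) : SimpleGraph (Fin n) where
  Adj i j := i ≠ j ∧ (i : ℕ) - (j : ℕ) ≤ t ∧ (j : ℕ) - (i : ℕ) ≤ t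
  symm := ⟨by intro i j h; exact ⟨h.1.symm, h.2.2, h.2.1⟩⟩
  loopless := ⟨by intro i h; exact h.1 rfl⟩

/-- Pick a color in `L` different from `c` (if possible). -/
def pick (L : Finset ℕ) (c : ℕ) : ℕ :=
  if h : (L.erase c).Nonempty then (L.erase c).min' h else 0

/-- A default color from the list. -/
def c0 (L : Finset ℕ) : ℕ := if h : L.Nonempty then L.min' h else 0

lemma c0_mem {L : Finset ℕ} (h : L.Nonempty) : c0 L ∈ L := by
  rw [c0, dif_pos h]; exact L.min'_mem h

lemma pick_spec {L : Finset ℕ} (h : 2 ≤ L.card) (c : ℕ) : pick L c ∈ L ∧ pick L c ≠ c := by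
  have hne : (L.erase c).Nonempty := by
    rw [← Finset.card_pos]
    have := Finset.pred_card_le_card_erase (s := L) (a := c)
    omega
  rw [pick, dif_pos hne]
  have hm := (L.erase c).min'_mem hne
  exact ⟨Finset.mem_of_mem_erase hm, Finset.ne_of_mem_erase hm⟩

lemma anchor_lt {t n : ℕ} (v : Fin n) (h : 1 ≤ v.val % (t*t+t) / t ∧ 1 ≤ t) :
    v.val / (t*t+t) * (t*t+t) + (v.val % (t*t+t) / t - 1) < n := by
  have h1 : v.val % (t*t+t) / t * t ≤ v.val % (t*t+t) := Nat.div_mul_le_self _ _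
  have h2 : v.val % (t*t+t) / t ≤ v.val % (t*t+t) / t * t :=
    Nat.le_mul_of_pos_right _ h.2
  have h3 : v.val / (t*t+t) * (t*t+t) + v.val % (t*t+t) = v.val := Nat.div_add_mod' _ _
  have h4 := v.isLt
  omega

/-- The coloring: blocks of size `t(t+1) = t*t+t`; vertices of the `i`-th tuple (`i ≥ 1`)
within a block avoid the color of the `i`-th vertex of the `0`-th tuple of the block. -/
def phi (t n : ℕ) (L : Fin n → Finset ℕ) (v : Fin n) : ℕ :=
  if h : 1 ≤ v.val % (t*t+t) / t ∧ 1 ≤ t then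
    pick (L v) (c0 (L ⟨v.val / (t*t+t) * (t*t+t) + (v.val % (t*t+t) / t - 1), anchor_lt v h⟩))
  else c0 (L v)

lemma phi_mem {t n : ℕ} {L : Fin n → Finset ℕ} (hL : ∀ u, 2 ≤ (L u).card) (v : Fin n) :
    phi t n L v ∈ L v := by
  rw [phi]
  split
  · exact (pick_spec (hL v) _).1
  · exact c0_mem (Finset.card_pos.mp (by have := hL v; omega))

lemma phi_eq_c0 {t n : ℕ} (L : Fin n → Finset ℕ) (v : Fin n)
    (h : v.val % (t*t+t) / t = 0) : phi t n L v = c0 (L v) := by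
  rw [phi, dif_neg]; rintro ⟨h1, -⟩; omega

lemma phi_ne {t n : ℕ} {L : Fin n → Finset ℕ} (hL : ∀ u, 2 ≤ (L u).card) (v : Fin n)
    (h1 : 1 ≤ v.val % (t*t+t) / t) (ht : 1 ≤ t) (a : Fin n)
    (ha : (a : ℕ) = v.val / (t*t+t) * (t*t+t) + (v.val % (t*t+t) / t - 1)) :
    phi t n L v ≠ c0 (L a) := by
  rw [phi, dif_pos ⟨h1, ht⟩]
  have hh : a = ⟨v.val / (t*t+t) * (t*t+t) + (v.val % (t*t+t) / t - 1), anchor_lt v ⟨h1, ht⟩⟩ :=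
    Fin.val_injective ha
  rw [hh]
  exact (pick_spec (hL v) _).2

lemma window_aux {t n : ℕ} {S : Set (Fin n)} (a : ℕ) :
    ∀ {x y : ↥S}, ((pathPower t n).induce S).Walk x y →
      ((x : Fin n) : ℕ) < a → a + t ≤ ((y : Fin n) : ℕ) →
      ∃ z : ↥S, ((pathPower t n).induce S).Reachable x z ∧
        a ≤ ((z : Fin n) : ℕ) ∧ ((z : Fin n) : ℕ) < a + t := by
  intro x y w
  induction w with
  | nil =>
      intro h1 h2
      exact absurd h2 (by omega)
  | @cons u mid yv hadj p ih =>
      intro h1 h2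
      by_cases hb : ((mid : Fin n) : ℕ) < a
      · obtain ⟨z, hz1, hz2, hz3⟩ := ih hb h2
        exact ⟨z, hadj.reachable.trans hz1, hz2, hz3⟩
      · have hadj' : (pathPower t n).Adj u.val mid.val := hadj
        have h3 : ((mid : Fin n) : ℕ) - ((u : Fin n) : ℕ) ≤ t := hadj'.2.2
        exact ⟨mid, hadj.reachable, by omega, by omega⟩

lemma count_bound {t n : ℕ} (ht : 1 ≤ t) {L : Fin n → Finset ℕ} (hL : ∀ u, 2 ≤ (L u).card)
    (v : Fin n) (S : Set (Fin n)) (hS : S = {u | phi t n L u = phi t n L v}) (x : ↥S) :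
    {w : ↥S | ((pathPower t n).induce S).Reachable x w}.ncard ≤ 2 * t ^ 2 := by
  classical
  set c := phi t n L v with hc
  have hmemS : ∀ w : ↥S, phi t n L w.1 = c := by
    intro w
    exact (Set.ext_iff.mp hS w.1).mp w.2
  set R : Set ↥S := {w | ((pathPower t n).induce S).Reachable x w} with hR
  have hRfin : R.Finite := Set.toFinite R
  have hNfin : ((fun w : ↥S => ((w : Fin n) : ℕ)) '' R).Finite := hRfin.image _
  set F : Finset ℕ := hNfin.toFinset with hF
  have hginj : Function.Injective (fun w : ↥S => ((w : Fin n) : ℕ)) := by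
    intro a b hab
    exact Subtype.ext (Fin.val_injective hab)
  have hcard : R.ncard = F.card := by
    rw [← Set.ncard_coe_finset F, hF, Set.Finite.coe_toFinset,
      Set.ncard_image_of_injective R hginj]
  have hFmem : ∀ z, z ∈ F ↔ ∃ w : ↥S, w ∈ R ∧ ((w : Fin n) : ℕ) = z := by
    intro z
    rw [hF, Set.Finite.mem_toFinset]
    simp [Set.mem_image]
  have q1 : ∀ z ∈ F, z < n := by
    intro z hz
    obtain ⟨w, -, rfl⟩ := (hFmem z).mp hz
    exact (w.1).isLt
  have q2 : ∀ (z : ℕ) (hz : z ∈ F) (hzn : z < n), phi t n L ⟨z, hzn⟩ = c := by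
    intro z hz hzn
    obtain ⟨w, -, hw⟩ := (hFmem z).mp hz
    have hww : w.1 = ⟨z, hzn⟩ := Fin.val_injective hw
    rw [← hww]
    exact hmemS w
  have q3 : ∀ p ∈ F, ∀ q ∈ F, ∀ a, p < a → a + t ≤ q → ∃ z ∈ F, a ≤ z ∧ z < a + t := by
    intro p hp q hq a hpa haq
    obtain ⟨wp, hwp, rfl⟩ := (hFmem p).mp hp
    obtain ⟨wq, hwq, rfl⟩ := (hFmem q).mp hq
    obtain ⟨walk⟩ := hwp.symm.trans hwq
    obtain ⟨z, hz1, hz2, hz3⟩ := window_aux a walk hpa haq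
    exact ⟨((z : Fin n) : ℕ), (hFmem _).mpr ⟨z, hwp.trans hz1, rfl⟩, hz2, hz3⟩
  have hFne : F.Nonempty :=
    ⟨((x : Fin n) : ℕ), (hFmem _).mpr ⟨x, SimpleGraph.Reachable.refl x, rfl⟩⟩
  -- barrier lemma
  have q5 : ∀ (b j : ℕ), 1 ≤ j → j ≤ t → b*(t*t+t) + (j-1) ∈ F →
      ∀ z ∈ F, ¬ (b*(t*t+t) + j*t ≤ z ∧ z < b*(t*t+t) + j*t + t) := by
    intro b j hj1 hjt hanch z hz hzw
    obtain ⟨hz1, hz2⟩ := hzw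
    have hjtt : j * t ≤ t * t := Nat.mul_le_mul_right t hjt
    have hjjt : j ≤ j * t := Nat.le_mul_of_pos_right j ht
    have hanchn : b*(t*t+t) + (j-1) < n := q1 _ hanch
    have hzn : z < n := q1 _ hz
    -- anchor has tuple-index 0, so its color is c0
    have hmod1 : (b*(t*t+t) + (j-1)) % (t*t+t) = j - 1 := by
      rw [add_comm (b*(t*t+t)) (j-1), Nat.add_mul_mod_self_right]
      exact Nat.mod_eq_of_lt (by omega)
    have hanchor_c : c = c0 (L ⟨b*(t*t+t) + (j-1), hanchn⟩) := by
      have h0 : (⟨b*(t*t+t) + (j-1), hanchn⟩ : Fin n).val % (t*t+t) / t = 0 := by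
        show (b*(t*t+t) + (j-1)) % (t*t+t) / t = 0
        rw [hmod1]
        exact Nat.div_eq_of_lt (by omega)
      rw [← q2 _ hanch hanchn]
      exact phi_eq_c0 L _ h0
    -- z lies in the j-th tuple of block b, so avoids c0 of the anchor
    obtain ⟨s, hzs, hs1, hs2⟩ : ∃ s, z = b*(t*t+t) + s ∧ j*t ≤ s ∧ s < j*t + t :=
      ⟨z - b*(t*t+t), by omega, by omega, by omega⟩
    subst hzs
    have hzmod : (b*(t*t+t) + s) % (t*t+t) = s := by
      rw [add_comm (b*(t*t+t)) s, Nat.add_mul_mod_self_right]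
      exact Nat.mod_eq_of_lt (by omega)
    have hzdiv : (b*(t*t+t) + s) / (t*t+t) = b :=
      Nat.div_eq_of_lt_le (by omega) (by rw [Nat.succ_mul]; omega)
    have hst : s / t = j :=
      Nat.div_eq_of_lt_le (by omega) (by rw [Nat.succ_mul]; omega)
    have h1 : 1 ≤ (⟨b*(t*t+t) + s, hzn⟩ : Fin n).val % (t*t+t) / t := by
      show 1 ≤ (b*(t*t+t) + s) % (t*t+t) / t
      rw [hzmod, hst]
      exact hj1
    have hne := phi_ne hL (⟨b*(t*t+t) + s, hzn⟩ : Fin n) h1 ht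
      (⟨b*(t*t+t) + (j-1), hanchn⟩ : Fin n) (by
        show b*(t*t+t) + (j-1) =
          (b*(t*t+t) + s) / (t*t+t) * (t*t+t) + ((b*(t*t+t) + s) % (t*t+t) / t - 1)
        rw [hzdiv, hzmod, hst])
    rw [q2 _ hz hzn, hanchor_c] at hne
    exact hne rfl
  -- now the pure arithmetic part
  suffices hFA : F.card ≤ 2*(t*t) by
    rw [hcard]
    have : 2*t^2 = 2*(t*t) := by ring
    omega
  obtain ⟨a, haF, hmin⟩ : ∃ a ∈ F, ∀ z ∈ F, a ≤ z :=
    ⟨F.min' hFne, F.min'_mem hFne, fun z hz => F.min'_le z hz⟩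
  obtain ⟨bmax, hbF, hmax⟩ : ∃ b ∈ F, ∀ z ∈ F, z ≤ b :=
    ⟨F.max' hFne, F.max'_mem hFne, fun z hz => F.le_max' z hz⟩
  obtain ⟨B, hD1, hD2⟩ : ∃ B, B*(t*t+t) ≤ a ∧ a < B*(t*t+t) + (t*t+t) := by
    refine ⟨a / (t*t+t), Nat.div_mul_le_self a _, ?_⟩
    have h3 : a / (t*t+t) * (t*t+t) + a % (t*t+t) = a := Nat.div_add_mod' _ _
    have h4 : a % (t*t+t) < t*t+t := Nat.mod_lt a (by
      have : 0 ≤ t*t := Nat.zero_le _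
      omega)
    omega
  have htt : t ≤ t*t := Nat.le_mul_of_pos_left t ht
  have hIco : ∃ lo hi, hi ≤ lo + 2*(t*t) ∧ ∀ z ∈ F, lo ≤ z ∧ z < hi := by
    by_cases hcase1 : bmax < B*(t*t+t) + (t*t+t)
    · refine ⟨B*(t*t+t), B*(t*t+t) + (t*t+t), by omega, fun z hz => ?_⟩
      have h1 := hmin z hz
      have h2 := hmax z hz
      omega
    · push_neg at hcase1
      -- Step A: nothing in the 0-th tuple of block B
      have hA : ∀ z ∈ F, B*(t*t+t) + t ≤ z := by
        intro z hz
        by_contra hcon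
        push_neg at hcon
        have hza : B*(t*t+t) ≤ z := le_trans hD1 (hmin z hz)
        obtain ⟨j, hj1, hj2, hjz⟩ : ∃ j, 1 ≤ j ∧ j ≤ t ∧ z = B*(t*t+t) + (j-1) :=
          ⟨z - B*(t*t+t) + 1, by omega, by omega, by omega⟩
        have hjjt : j ≤ j*t := Nat.le_mul_of_pos_right j ht
        have hjtt : j*t ≤ t*t := Nat.mul_le_mul_right t hj2
        obtain ⟨z', hz'F, hz'1, hz'2⟩ :=
          q3 z hz bmax hbF (B*(t*t+t) + j*t) (by omega) (by omega)
        exact q5 B j hj1 hj2 (by rw [← hjz]; exact hz) z' hz'F ⟨by omega, by omega⟩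
      by_cases hcase2 : ∃ z₀ ∈ F, B*(t*t+t)+(t*t+t) ≤ z₀ ∧ z₀ < B*(t*t+t)+(t*t+t)+t
      · obtain ⟨z₀, hz₀F, hz₀1, hz₀2⟩ := hcase2
        have hBM : (B+1)*(t*t+t) = B*(t*t+t)+(t*t+t) := by ring
        obtain ⟨j, hj1, hj2, hjz⟩ : ∃ j, 1 ≤ j ∧ j ≤ t ∧ z₀ = (B+1)*(t*t+t) + (j-1) :=
          ⟨z₀ - (B*(t*t+t)+(t*t+t)) + 1, by omega, by omega, by omega⟩
        have hjjt : j ≤ j*t := Nat.le_mul_of_pos_right j ht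
        have hjtt : j*t ≤ t*t := Nat.mul_le_mul_right t hj2
        have hbar := q5 (B+1) j hj1 hj2 (by rw [← hjz]; exact hz₀F)
        have hbmax : bmax < (B+1)*(t*t+t) + j*t + t := by
          by_contra hcon
          push_neg at hcon
          obtain ⟨z', hz'F, hz'1, hz'2⟩ :=
            q3 z₀ hz₀F bmax hbF ((B+1)*(t*t+t) + j*t) (by omega) (by omega)
          exact hbar z' hz'F ⟨by omega, by omega⟩
        refine ⟨B*(t*t+t) + t, (B+1)*(t*t+t) + j*t, by omega, fun z hz => ⟨hA z hz, ?_⟩⟩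
        have h1 := hmax z hz
        have h2 := hbar z hz
        omega
      · push_neg at hcase2
        have hbmax : bmax < B*(t*t+t)+(t*t+t)+t := by
          by_contra hcon
          push_neg at hcon
          obtain ⟨z', hz'F, hz'1, hz'2⟩ :=
            q3 a haF bmax hbF (B*(t*t+t)+(t*t+t)) (by omega) (by omega)
          have := hcase2 z' hz'F
          omega
        refine ⟨B*(t*t+t) + t, B*(t*t+t)+(t*t+t)+t, by omega, fun z hz => ⟨hA z hz, ?_⟩⟩
        have h1 := hmax z hz
        omega
  obtain ⟨lo, hi, hlen, hsub⟩ := hIco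
  have hsub' : F ⊆ Finset.Ico lo hi := fun z hz => Finset.mem_Ico.mpr (hsub z hz)
  have hcc := Finset.card_le_card hsub'
  rw [Nat.card_Ico] at hcc
  omega

/-- `χ^ℓ_{⋆,2t²}(P_n^t) ≤ 2`: for every 2-list assignment `L` of `P_n^t`
there is an `L`-coloring in which every monochromatic connected component has at most
`2t²` vertices. -/
theorem stmt_13 (t n : ℕ) (ht : 1 ≤ t) (hn : 1 ≤ n)
    (L : Fin n → Finset ℕ) (hL : ∀ v, 2 ≤ (L v).card) :
    ∃ φ : Fin n → ℕ, (∀ v, φ v ∈ L v) ∧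
      ∀ v : Fin n,
        {w : {u | φ u = φ v} |
          ((pathPower t n).induce {u | φ u = φ v}).Reachable ⟨v, rfl⟩ w}.ncard ≤ 2 * t ^ 2 := by
  exact ⟨phi t n L, fun v => phi_mem hL v,
    fun v => count_bound ht hL v {u | phi t n L u = phi t n L v} rfl ⟨v, rfl⟩⟩
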